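/- Let S_n be the sum of n i.i.d. Rademacher random variables and let γ ≥ 0 satisfy γ = o(√n) (in particular γ ≤ √n). Then P(S_n ≥ γ√n) ≥ (1/√(2n))·exp(-γ²/2 - γ⁴/(12n) + O(γ⁵/n^{3/2})). More precisely, there exist absolute constants C, n₀ such that for all n ≥ n₀ and all 0 ≤ γ ≤ n^{1/4}, P(S_n ≥ γ√n) ≥ (1/√(2n))·exp(-γ²/2 - γ⁴/(12n) - C·γ⁵/n^{3/2}). -/

import Mathlib

/-- The probability that a sum `S_n` of `n` i.i.d. Rademacher variables is at least `x`:
`P(S_n ≥ x) = 2^{-n} · ∑_{k : 2k-n ≥ x} C(n,k)`. -/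
noncomputable def radTailProb (n : ℕ) (x : ℝ) : ℝ :=
  (∑ k ∈ Finset.range (n + 1),
    if x ≤ 2 * (k : ℝ) - n then (n.choose k : ℝ) else 0) / 2 ^ n

set_option maxHeartbeats 1000000

namespace RadAux
open Real Stirling

lemma sqrtPi_le (m : ℕ) (hm : 1 ≤ m) : Real.sqrt π ≤ stirlingSeq m := by
  obtain ⟨m, rfl⟩ := Nat.exists_eq_add_of_le hm
  rw [add_comm]
  exact Antitone.le_of_tendsto stirlingSeq'_antitone
    (tendsto_stirlingSeq_sqrt_pi.comp (Filter.tendsto_add_atTop_nat 1)) m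

lemma stirling8 : stirlingSeq 8 ≤ 1.792 := by
  have h := Real.exp_one_lt_d9
  have he : (0:ℝ) < Real.exp 1 := Real.exp_pos 1
  rw [stirlingSeq]
  have h16 : Real.sqrt (2 * (8:ℕ) : ℝ) = 4 := by
    norm_num
  rw [h16]
  rw [div_le_iff₀ (by positivity)]
  have hle : Real.exp 1 ^ 8 ≤ 2.7182818286 ^ 8 := pow_le_pow_left₀ he.le h.le 8
  have h2 : (2.7182818286:ℝ) ^ 8 ≤ 2981 := by norm_num
  rw [div_pow, mul_div_assoc', mul_div_assoc']
  rw [le_div_iff₀ (by positivity)]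
  calc ((Nat.factorial 8 : ℝ)) * Real.exp 1 ^ 8 ≤ 40320 * 2981 := by
        rw [show Nat.factorial 8 = 40320 by rfl]
        push_cast
        nlinarith [hle, h2, pow_pos he 8]
    _ ≤ 1.792 * (4 * (8:ℕ) ^ 8) := by norm_num

lemma stirling_le (m : ℕ) (hm : 8 ≤ m) : stirlingSeq m ≤ 1.792 := by
  refine le_trans ?_ stirling8
  obtain ⟨j, rfl⟩ := Nat.exists_eq_add_of_le hm
  have := stirlingSeq'_antitone (show 7 ≤ 7 + j by omega)
  simpa [Function.comp, Nat.succ_eq_add_one, add_comm, add_assoc, add_left_comm] using this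

noncomputable def D (m : ℕ) : ℝ := Real.sqrt (2*m) * ((m:ℝ)/Real.exp 1)^m

lemma D_pos (m : ℕ) (hm : 1 ≤ m) : 0 < D m := by
  have : (0:ℝ) < m := by exact_mod_cast hm
  unfold D; positivity

lemma fact_lower (m : ℕ) (hm : 1 ≤ m) : Real.sqrt π * D m ≤ (Nat.factorial m : ℝ) := by
  have h := sqrtPi_le m hm
  rw [stirlingSeq] at h
  have hD := D_pos m hm
  rw [le_div_iff₀ (by unfold D at hD; exact hD)] at h
  exact h

lemma fact_upper (m : ℕ) (hm : 8 ≤ m) : (Nat.factorial m : ℝ) ≤ 1.792 * D m := by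
  have h := stirling_le m hm
  rw [stirlingSeq] at h
  have hD := D_pos m (by omega)
  rw [div_le_iff₀ (by unfold D at hD; exact hD)] at h
  exact h

lemma exp_form (m : ℕ) (hm : 1 ≤ m) :
    ((m:ℝ)/Real.exp 1)^m = Real.exp ((m:ℝ) * Real.log m - m) := by
  have hm' : (0:ℝ) < m := by exact_mod_cast hm
  have h1 : ((m:ℝ)/Real.exp 1) = Real.exp (Real.log m - 1) := by
    rw [Real.exp_sub, Real.exp_log hm']
  rw [h1, ← Real.exp_nat_mul]
  ring_nf

lemma choose_lower (a b : ℕ) (ha : 8 ≤ a) (hb : 8 ≤ b) :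
    Real.sqrt π / 1.792^2 * (Real.sqrt (2*((a:ℝ)+b)) / (Real.sqrt (2*a) * Real.sqrt (2*b))) *
      Real.exp (((a:ℝ)+b) * Real.log ((a:ℝ)+b) - a * Real.log a - b * Real.log b
        - ((a:ℝ)+b) * Real.log 2)
    ≤ ((a+b).choose a : ℝ) / 2^(a+b) := by
  set n := a + b with hn
  have hfa : (0:ℝ) < Nat.factorial a := by exact_mod_cast (Nat.factorial_pos a)
  have hfb : (0:ℝ) < Nat.factorial b := by exact_mod_cast (Nat.factorial_pos b)
  have hch : ((n.choose a : ℝ)) = (Nat.factorial n : ℝ) / (Nat.factorial a * Nat.factorial b) := by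
    rw [eq_div_iff (by positivity)]
    rw [← mul_assoc]
    have h := Nat.choose_mul_factorial_mul_factorial (show a ≤ n by omega)
    rw [show n - a = b by omega] at h
    exact_mod_cast congrArg (Nat.cast (R:=ℝ)) h
  have hDa := D_pos a (by omega)
  have hDb := D_pos b (by omega)
  have hDn := D_pos n (by omega)
  have hlow : Real.sqrt π * D n / (1.792 * D a * (1.792 * D b)) ≤ (n.choose a : ℝ) := by
    rw [hch]
    apply div_le_div₀ (le_of_lt (by positivity)) (fact_lower n (by omega)) (by positivity)
    exact mul_le_mul (fact_upper a ha) (fact_upper b hb) hfb.le (by positivity)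
  have hn' : ((n:ℝ)) = (a:ℝ) + b := by rw [hn]; push_cast; ring
  have hstep : Real.sqrt π * D n / (1.792 * D a * (1.792 * D b)) / 2^n
      ≤ (n.choose a : ℝ) / 2^n := by
    apply div_le_div_of_nonneg_right hlow (by positivity)
  refine le_of_eq_of_le ?_ hstep
  unfold D
  rw [exp_form a (by omega), exp_form b (by omega), exp_form n (by omega)]
  have h2 : (2:ℝ)^n = Real.exp ((n:ℝ) * Real.log 2) := by
    rw [Real.exp_nat_mul, Real.exp_log two_pos]
  have key : Real.exp ((n:ℝ)*Real.log n - n)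
      = Real.exp (((a:ℝ)+b) * Real.log ((a:ℝ)+b) - a * Real.log a - b * Real.log b
          - ((a:ℝ)+b) * Real.log 2) * Real.exp ((n:ℝ)*Real.log 2)
        * (Real.exp ((a:ℝ)*Real.log a - a) * Real.exp ((b:ℝ)*Real.log b - b)) := by
    rw [← Real.exp_add, ← Real.exp_add, ← Real.exp_add]
    congr 1
    rw [hn']
    ring
  rw [h2, key, hn']
  have e1 := Real.exp_pos (((a:ℝ)+b) * Real.log 2)
  have e2 := Real.exp_pos ((a:ℝ)*Real.log a - a)
  have e3 := Real.exp_pos ((b:ℝ)*Real.log b - b)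
  have s1 : (0:ℝ) < Real.sqrt (2*a) := by
    have : (0:ℝ) < a := by exact_mod_cast (by omega : 0 < a)
    positivity
  have s2 : (0:ℝ) < Real.sqrt (2*b) := by
    have : (0:ℝ) < b := by exact_mod_cast (by omega : 0 < b)
    positivity
  rw [hn'] at *
  field_simp


lemma ent_bound {x : ℝ} (h0 : 0 ≤ x) (h1 : x ≤ 1/2) :
    (1+x) * Real.log (1+x) + (1-x) * Real.log (1-x) ≤ x^2 + x^4/6 + 3*x^6 := by
  have hax : |x| < 1 := by rw [abs_of_nonneg h0]; linarith
  have hax' : |(-x)| < 1 := by rw [abs_neg]; exact hax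
  have H1 := Real.abs_log_sub_add_sum_range_le hax 6
  have H2 := Real.abs_log_sub_add_sum_range_le hax' 6
  rw [abs_of_nonneg h0] at H1
  rw [abs_neg, abs_of_nonneg h0] at H2
  simp only [Finset.sum_range_succ, Finset.sum_range_zero] at H1 H2
  norm_num at H1 H2
  ring_nf at H2
  rw [abs_le] at H1 H2
  have hden : x^7/(1-x) ≤ 2*x^7 := by
    rcases eq_or_lt_of_le h0 with h|h
    · simp [← h]
    · rw [div_le_iff₀ (by linarith)]
      nlinarith [pow_pos h 7]
  obtain ⟨H1a, H1b⟩ := H1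
  obtain ⟨H2a, H2b⟩ := H2
  nlinarith [mul_le_mul_of_nonneg_left (H1b.trans hden) (by linarith : (0:ℝ) ≤ 1 - x),
    mul_le_mul_of_nonneg_left (H2b.trans hden) (by linarith : (0:ℝ) ≤ 1 + x),
    pow_nonneg h0 7, pow_nonneg h0 6]


lemma poly_bound {q u x : ℝ} (hq : 10^4 ≤ q) (hu0 : 0 ≤ u) (hu2 : u^2*q ≤ 1)
    (hux : u ≤ x) (hd' : q^2*(x-u) ≤ 2) :
    q^2/2 * (x^2 + x^4/6 + 3*x^6) ≤ q^2*u^2/2 + q^2*u^4/12 + 3/100 := by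
  have hq0 : (0:ℝ) < q := by linarith
  have hd0 : (0:ℝ) ≤ x - u := by linarith
  have hx0 : 0 ≤ x := le_trans hu0 hux
  have hq2 : (10:ℝ)^8 ≤ q^2 := by nlinarith
  have hu : u ≤ 1/100 := by nlinarith [mul_le_mul_of_nonneg_right hq (sq_nonneg u)]
  have hd2 : x - u ≤ 2/10^8 := by nlinarith [mul_le_mul_of_nonneg_right hq2 hd0]
  have hx : x ≤ 11/1000 := by linarith
  have h1 : q^2*(x^2-u^2) ≤ 2*(x+u) := by
    calc q^2*(x^2-u^2) = q^2*(x-u)*(x+u) := by ring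
      _ ≤ 2*(x+u) := mul_le_mul_of_nonneg_right hd' (by linarith)
  have hu3 : u^3 ≤ x^3 := pow_le_pow_left₀ hu0 hux 3
  have hu2' : u^2 ≤ x^2 := pow_le_pow_left₀ hu0 hux 2
  have e1 : x^2*u ≤ x^3 := by nlinarith [sq_nonneg x]
  have e2 : x*u^2 ≤ x^3 := by nlinarith [mul_le_mul_of_nonneg_left hu2' hx0]
  have h2 : q^2*(x^4-u^4) ≤ 8*x^3 := by
    have hid4 : x^4 - u^4 = (x-u)*(x^3+x^2*u+x*u^2+u^3) := by ring
    calc q^2*(x^4-u^4) = (q^2*(x-u))*(x^3+x^2*u+x*u^2+u^3) := by rw [hid4]; ring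
      _ ≤ (q^2*(x-u))*(4*x^3) := by
          apply mul_le_mul_of_nonneg_left (by linarith) (by positivity)
      _ ≤ 2*(4*x^3) := mul_le_mul_of_nonneg_right hd' (by positivity)
      _ = 8*x^3 := by ring
  have hqd : q*(x-u) ≤ 2/10^4 := by
    nlinarith [mul_le_mul_of_nonneg_right hq (mul_nonneg hq0.le hd0)]
  have hx2 : q*x^2 ≤ 2 := by
    have hexp : q*x^2 = u^2*q + 2*u*(q*(x-u)) + (q*(x-u))*(x-u) := by ring
    rw [hexp]
    nlinarith [mul_nonneg (mul_nonneg hq0.le hd0) hd0, mul_nonneg hu0 (mul_nonneg hq0.le hd0)]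
  have h3 : q^3*x^6 ≤ 8 := by
    have hpp : (q*x^2)^3 ≤ 2^3 := pow_le_pow_left₀ (by positivity) hx2 3
    have hid : (q*x^2)^3 = q^3*x^6 := by ring
    rw [hid] at hpp; linarith
  have h3' : q^2*x^6 ≤ 8/10^4 := by
    nlinarith [mul_le_mul_of_nonneg_right hq (mul_nonneg (sq_nonneg q) (pow_nonneg hx0 6))]
  have hx3 : x^3 ≤ (11/1000)^3 := pow_le_pow_left₀ hx0 hx 3
  nlinarith [h1, h2, h3', hx3, hx, hu]

end RadAux

open RadAux Real

/-- Refined lower tail estimate for Rademacher sums: there are absolute constants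
`C, n₀` such that for all `n ≥ n₀` and all `0 ≤ γ ≤ n^{1/4}`,
`P(S_n ≥ γ√n) ≥ (1/√(2n))·exp(-γ²/2 - γ⁴/(12n) - C·γ⁵/n^{3/2})`. -/
theorem rademacher_tail_lower_bound :
    ∃ C : ℝ, ∃ n₀ : ℕ, 0 < C ∧
      ∀ n : ℕ, n₀ ≤ n → ∀ γ : ℝ, 0 ≤ γ → γ ≤ (n : ℝ) ^ ((1 : ℝ) / 4) →
        (1 / Real.sqrt (2 * n)) *
            Real.exp (-γ ^ 2 / 2 - γ ^ 4 / (12 * n) - C * γ ^ 5 / (n : ℝ) ^ ((3 : ℝ) / 2))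
          ≤ radTailProb n (γ * Real.sqrt n) := by
  refine ⟨1, 10^8, one_pos, ?_⟩
  intro n hn γ hγ0 hγ
  have hn0 : 0 < n := by omega
  have hnR : (0:ℝ) < n := by exact_mod_cast hn0
  have hnn : (10:ℝ)^8 ≤ (n:ℝ) := by exact_mod_cast hn
  set q := Real.sqrt (n:ℝ) with hqdef
  have hq0 : 0 < q := Real.sqrt_pos.mpr hnR
  have hq2 : q^2 = (n:ℝ) := Real.sq_sqrt hnR.le
  have hq4 : (10:ℝ)^4 ≤ q := by
    nlinarith [hq2, hq0, hnn]
  -- γ² ≤ q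
  have h14 : ((n:ℝ)^((1:ℝ)/4))^2 = q := by
    rw [← Real.rpow_natCast ((n:ℝ)^((1:ℝ)/4)) 2, ← Real.rpow_mul hnR.le]
    norm_num
    rw [hqdef, Real.sqrt_eq_rpow]
  have hγq : γ^2 ≤ q := by
    rw [← h14]; exact pow_le_pow_left₀ hγ0 hγ 2
  have hγ100 : 100*γ ≤ q := by nlinarith
  -- the index k
  set k := Nat.ceil (((n:ℝ) + γ*q)/2) with hkdef
  have hkl : ((n:ℝ) + γ*q)/2 ≤ k := Nat.le_ceil _
  have hku : (k:ℝ) ≤ ((n:ℝ)+γ*q)/2 + 1 := le_of_lt (Nat.ceil_lt_add_one (by positivity))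
  have hγqn : γ*q ≤ (n:ℝ)/100 := by nlinarith
  have hkn : k ≤ n := by
    rw [hkdef, Nat.ceil_le]
    linarith
  have h8k : 8 ≤ k := by
    have h8 : (8:ℝ) ≤ (k:ℝ) := le_trans (by nlinarith [mul_nonneg hγ0 hq0.le]) hkl
    exact_mod_cast h8
  set b := n - k with hbdef
  have hab : k + b = n := by omega
  have hbR : (b:ℝ) = (n:ℝ) - k := by
    rw [hbdef]; push_cast [hkn]; ring
  have h8b : 8 ≤ b := by
    have h8 : (8:ℝ) ≤ (b:ℝ) := by rw [hbR]; nlinarith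
    exact_mod_cast h8
  have hkbR : (k:ℝ) + b = (n:ℝ) := by rw [hbR]; ring
  -- tail ≥ single term
  have htail : ((n.choose k : ℝ))/2^n ≤ radTailProb n (γ * q) := by
    unfold radTailProb
    gcongr
    have hmem : k ∈ Finset.range (n+1) := Finset.mem_range.mpr (by omega)
    have hsingle := Finset.single_le_sum
      (f := fun (j : ℕ) => if γ*q ≤ 2*(j:ℝ)-(n:ℝ) then (n.choose j:ℝ) else 0)
      (fun i _ => by split <;> positivity) hmem
    simpa [if_pos (show γ*q ≤ 2*(k:ℝ)-(n:ℝ) by linarith)] using hsingle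
  -- choose lower bound
  have hcb := choose_lower k b h8k h8b
  rw [hab, hkbR] at hcb
  -- substitution x
  set x := (2*(k:ℝ) - n)/n with hxdef
  set u := γ/q with hudef
  have hu0 : 0 ≤ u := by positivity
  have hu2 : u^2*q ≤ 1 := by
    rw [hudef]
    rw [div_pow, div_mul_eq_mul_div, div_le_one (by positivity)]
    nlinarith
  have huq : u = γ*q/(n:ℝ) := by rw [hudef, ← hq2]; field_simp
  have hux : u ≤ x := by
    rw [huq, hxdef]
    rw [div_le_div_iff_of_pos_right hnR]
    linarith
  have hd' : q^2*(x-u) ≤ 2 := by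
    rw [huq, hxdef, hq2]
    have : (2*(k:ℝ)-n)/n - γ*q/n = (2*(k:ℝ)-n-γ*q)/n := by ring
    rw [this, mul_div_assoc']
    rw [div_le_iff₀ hnR]
    nlinarith
  have hx0 : 0 ≤ x := le_trans hu0 hux
  have hx12 : x ≤ 1/2 := by
    rw [hxdef, div_le_iff₀ hnR]
    nlinarith
  have h1x : (0:ℝ) < 1 + x := by linarith
  have h2x : (0:ℝ) < 1 - x := by linarith
  have hkx : (k:ℝ) = (n:ℝ)*(1+x)/2 := by rw [hxdef]; field_simp; try ring
  have hbx : (b:ℝ) = (n:ℝ)*(1-x)/2 := by rw [hbR, hxdef]; field_simp; try ring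
  have hkpos : (0:ℝ) < k := by rw [hkx]; positivity
  have hbpos : (0:ℝ) < b := by rw [hbx]; positivity
  -- logs
  have hlogk : Real.log k = Real.log n + Real.log (1+x) - Real.log 2 := by
    rw [hkx, Real.log_div (by positivity) (by norm_num),
      Real.log_mul (by positivity) (by positivity)]
  have hlogb : Real.log b = Real.log n + Real.log (1-x) - Real.log 2 := by
    rw [hbx, Real.log_div (by positivity) (by norm_num),
      Real.log_mul (by positivity) (by positivity)]
  have hexp_eq : (n:ℝ) * Real.log n - k * Real.log k - b * Real.log b - (n:ℝ) * Real.log 2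
      = -((k:ℝ)*Real.log (1+x) + b*Real.log (1-x)) := by
    rw [hlogk, hlogb]
    linear_combination (-(Real.log (n:ℝ) - Real.log 2)) * hkbR
  rw [hexp_eq] at hcb
  -- entropy bound
  have hS : (k:ℝ)*Real.log (1+x) + b*Real.log (1-x) ≤ γ^2/2 + γ^4/(12*n) + 3/100 := by
    have hent := ent_bound hx0 hx12
    have hpoly := poly_bound hq4 hu0 hu2 hux hd'
    have hrw : (k:ℝ)*Real.log (1+x) + b*Real.log (1-x)
        = (n:ℝ)/2*((1+x)*Real.log (1+x) + (1-x)*Real.log (1-x)) := by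
      rw [hkx, hbx]; ring
    rw [hrw]
    calc (n:ℝ)/2*((1+x)*Real.log (1+x)+(1-x)*Real.log (1-x))
        ≤ (n:ℝ)/2*(x^2+x^4/6+3*x^6) := by
          apply mul_le_mul_of_nonneg_left hent (by positivity)
      _ = q^2/2*(x^2+x^4/6+3*x^6) := by rw [hq2]
      _ ≤ q^2*u^2/2 + q^2*u^4/12 + 3/100 := hpoly
      _ = γ^2/2 + γ^4/(12*n) + 3/100 := by
          rw [← hq2, hudef]; field_simp
  -- final comparison
  have hsqn : Real.sqrt (2*(n:ℝ)) * Real.sqrt (2*(n:ℝ)) = 2*(n:ℝ) :=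
    Real.mul_self_sqrt (by positivity)
  have hsqn0 : 0 < Real.sqrt (2*(n:ℝ)) := Real.sqrt_pos.mpr (by positivity)
  have hpref : Real.sqrt (2*(k:ℝ)) * Real.sqrt (2*(b:ℝ)) ≤ (n:ℝ) := by
    rw [← Real.sqrt_mul (by positivity)]
    rw [show (n:ℝ) = Real.sqrt ((n:ℝ)^2) from (Real.sqrt_sq hnR.le).symm]
    apply Real.sqrt_le_sqrt
    nlinarith [sq_nonneg ((k:ℝ) - b)]
  have hP : Real.sqrt π / 1.792^2 * (2/Real.sqrt (2*(n:ℝ)))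
      ≤ Real.sqrt π / 1.792^2 * (Real.sqrt (2*(n:ℝ)) / (Real.sqrt (2*(k:ℝ)) * Real.sqrt (2*(b:ℝ)))) := by
    have hsp : (0:ℝ) < Real.sqrt π := Real.sqrt_pos.mpr Real.pi_pos
    have hd1 : (0:ℝ) < Real.sqrt (2*(k:ℝ)) * Real.sqrt (2*(b:ℝ)) := by positivity
    apply mul_le_mul_of_nonneg_left ?_ (by positivity)
    rw [div_le_div_iff₀ hsqn0 hd1]
    calc 2 * (Real.sqrt (2*(k:ℝ)) * Real.sqrt (2*(b:ℝ))) ≤ 2*(n:ℝ) := by linarith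
      _ = Real.sqrt (2*(n:ℝ)) * Real.sqrt (2*(n:ℝ)) := hsqn.symm
  have hpi : (1.772:ℝ) ≤ Real.sqrt π := by
    rw [show (1.772:ℝ) = Real.sqrt (1.772^2) from (Real.sqrt_sq (by norm_num)).symm]
    apply Real.sqrt_le_sqrt
    nlinarith [Real.pi_gt_d6]
  have he3 : Real.exp (3/100) ≤ 100/97 := by
    have h1 := Real.add_one_le_exp (-(3/100))
    rw [Real.exp_neg] at h1
    have hE := Real.exp_pos ((3:ℝ)/100)
    rw [le_inv_comm₀ (by norm_num) hE] at h1
    linarith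
  have hrp : (0:ℝ) < (n:ℝ)^((3:ℝ)/2) := Real.rpow_pos_of_pos hnR _
  have hγ5 : 0 ≤ 1*γ^5/(n:ℝ)^((3:ℝ)/2) := by positivity
  -- T + S ≤ 3/100
  set S := (k:ℝ)*Real.log (1+x) + b*Real.log (1-x) with hSdef
  set T := -γ ^ 2 / 2 - γ ^ 4 / (12 * (n:ℝ)) - 1 * γ ^ 5 / (n : ℝ) ^ ((3 : ℝ) / 2) with hTdef
  have hTS : T + S ≤ 3/100 := by
    rw [hTdef]
    have := hS
    linarith
  have hexpT : Real.exp T ≤ (100/97) * Real.exp (-S) := by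
    have : Real.exp T = Real.exp (T + S) * Real.exp (-S) := by
      rw [← Real.exp_add]; ring_nf
    rw [this]
    apply mul_le_mul_of_nonneg_right ?_ (Real.exp_pos _).le
    calc Real.exp (T+S) ≤ Real.exp (3/100) := Real.exp_le_exp.mpr hTS
      _ ≤ 100/97 := he3
  -- chain
  calc (1 / Real.sqrt (2 * (n:ℝ))) * Real.exp T
      ≤ (1 / Real.sqrt (2 * (n:ℝ))) * ((100/97) * Real.exp (-S)) := by
        apply mul_le_mul_of_nonneg_left hexpT (by positivity)
    _ ≤ Real.sqrt π / 1.792^2 * (2/Real.sqrt (2*(n:ℝ))) * Real.exp (-S) := by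
        have h197 : (100/97 : ℝ) ≤ Real.sqrt π/1.792^2*2 := by
          have hx : Real.sqrt π/1.792^2*2 = (2/1.792^2) * Real.sqrt π := by ring
          rw [hx]
          have h2 := mul_le_mul_of_nonneg_left hpi (by norm_num : (0:ℝ) ≤ 2/1.792^2)
          calc (100/97:ℝ) ≤ (2/1.792^2) * 1.772 := by norm_num
            _ ≤ (2/1.792^2) * Real.sqrt π := h2
        have hss : (0:ℝ) ≤ 1/Real.sqrt (2*(n:ℝ)) := by positivity
        have hnum : 1 / Real.sqrt (2*(n:ℝ)) * (100/97)
            ≤ Real.sqrt π/1.792^2*(2/Real.sqrt (2*(n:ℝ))) := by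
          have h2 := mul_le_mul_of_nonneg_left h197 hss
          calc 1 / Real.sqrt (2*(n:ℝ)) * (100/97)
              ≤ 1 / Real.sqrt (2*(n:ℝ)) * (Real.sqrt π/1.792^2*2) := h2
            _ = Real.sqrt π/1.792^2*(2/Real.sqrt (2*(n:ℝ))) := by ring
        have hg : 1 / Real.sqrt (2*(n:ℝ)) * ((100/97) * Real.exp (-S))
            = (1 / Real.sqrt (2*(n:ℝ)) * (100/97)) * Real.exp (-S) := by ring
        rw [hg]
        exact mul_le_mul_of_nonneg_right hnum (Real.exp_pos _).le
    _ ≤ Real.sqrt π / 1.792^2 * (Real.sqrt (2*(n:ℝ)) / (Real.sqrt (2*(k:ℝ)) * Real.sqrt (2*(b:ℝ)))) * Real.exp (-S) := by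
        apply mul_le_mul_of_nonneg_right hP (Real.exp_pos _).le
    _ ≤ ((n.choose k : ℝ))/2^n := hcb
    _ ≤ radTailProb n (γ * q) := htail
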